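/- Let X be a strongly regular graph with parameters (4m², 2m² + m, m² + m, m² + m) for a positive integer m, with adjacency matrix A. Then H = J − 2A is a regular real Hadamard matrix of order 4m², where J is the all-ones matrix. -/
import Mathlib


open Matrix

theorem stmt11 {V : Type} [Fintype V] [DecidableEq V] (m : ℕ) (hm : 1 ≤ m)
    (hcard : Fintype.card V = 4 * m ^ 2)
    (A : Matrix V V ℝ) (J : Matrix V V ℝ) (hJ : J = Matrix.of fun _ _ => (1 : ℝ))
    (hsymm : Aᵀ = A) (hdiag : ∀ i, A i i = 0)
    (h01 : ∀ i j, A i j = 0 ∨ A i j = 1)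
    (hsrg : A * A = (2 * m ^ 2 + m : ℝ) • (1 : Matrix V V ℝ)
      + (m ^ 2 + m : ℝ) • A + (m ^ 2 + m : ℝ) • (J - 1 - A))
    (hAJ : A * J = (2 * m ^ 2 + m : ℝ) • J)
    (H : Matrix V V ℝ) (hH : H = J - 2 • A) :
    (∀ i j, H i j = 1 ∨ H i j = -1) ∧
    H * Hᵀ = (4 * m ^ 2 : ℝ) • (1 : Matrix V V ℝ) ∧
    ∃ s : ℝ, H.mulVec (fun _ => 1) = fun _ => s := by
  have hJT : Jᵀ = J := by ext i j; simp [hJ]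
  have hHT : Hᵀ = H := by
    rw [hH, transpose_sub, hJT, transpose_smul, hsymm]
  have hJJ : J * J = (4 * m ^ 2 : ℝ) • J := by
    ext i j
    simp [hJ, Matrix.mul_apply, Finset.card_univ, hcard]
  have hJA : J * A = (2 * m ^ 2 + m : ℝ) • J := by
    have h := congrArg Matrix.transpose hAJ
    rw [transpose_mul, hsymm, hJT, transpose_smul, hJT] at h
    exact h
  have h2 : (2 : ℕ) • A = (2 : ℝ) • A := by
    ext i j; simp [Matrix.smul_apply]
  rw [h2] at hH
  have hmul : H * H = (4 * m ^ 2 : ℝ) • (1 : Matrix V V ℝ) := by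
    rw [hH, sub_mul, mul_sub, mul_sub]
    simp only [smul_mul_assoc, mul_smul_comm]
    rw [hJJ, hJA, hAJ, hsrg]
    module
  refine ⟨?_, ?_, ⟨-(2 * m), ?_⟩⟩
  · intro i j
    rcases h01 i j with h | h <;> simp [hH, hJ, Matrix.sub_apply, Matrix.smul_apply, h] <;> norm_num
  · rw [hHT]; exact hmul
  · have key : H * J = (-(2 * m) : ℝ) • J := by
      rw [hH, sub_mul, hJJ, smul_mul_assoc, hAJ]
      module
    funext i
    have := congrFun (congrFun key i) i
    simpa [Matrix.mul_apply, Matrix.mulVec, dotProduct, hJ] using this
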